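/- Let (z₁, z₂), (w₁, w₂) ∈ ℂ² and τ, σ ∈ ℝ, and set P := q((z₁, z₂), τ) and P' := q((w₁, w₂), σ) in Q_θ. Then the following are equivalent: (i) f(P) = f(P') for every bounded continuous function f : Q_θ → ℝ; (ii) |z₁| = |w₁| and |z₂| = |w₂|; (iii) P and P' do not have disjoint neighborhoods in Q_θ. -/

import Mathlib

open Filter Topology

/-- The equivalence relation `∼` on `ℂ² × ℝ`: `((z₁,z₂),τ) ∼ ((w₁,w₂),σ)` iff
`|z₁| = |w₁|`, `|z₂| = |w₂|`, and moreover `τ - σ ∈ ℤ` when `z₁ ≠ 0 = z₂`,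
`τ - σ ∈ θℤ` when `z₁ = 0 ≠ z₂`, and `τ = σ` when `z₁ = z₂ = 0`. -/
def mrel (θ : ℝ) (p q : (ℂ × ℂ) × ℝ) : Prop :=
  ‖p.1.1‖ = ‖q.1.1‖ ∧
  ‖p.1.2‖ = ‖q.1.2‖ ∧
  (p.1.1 ≠ 0 ∧ p.1.2 = 0 → ∃ k : ℤ, p.2 - q.2 = (k : ℝ)) ∧
  (p.1.1 = 0 ∧ p.1.2 ≠ 0 → ∃ k : ℤ, p.2 - q.2 = θ * (k : ℝ)) ∧
  (p.1.1 = 0 ∧ p.1.2 = 0 → p.2 = q.2)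

theorem mrel_equivalence (θ : ℝ) : Equivalence (mrel θ) := by
  constructor
  · exact fun p => ⟨rfl, rfl, fun _ => ⟨0, by simp⟩, fun _ => ⟨0, by simp⟩, fun _ => rfl⟩
  · rintro p q ⟨h1, h2, h3, h4, h5⟩
    have key : ∀ a b : ℂ, ‖a‖ = ‖b‖ → (a = 0 ↔ b = 0) := by
      intro a b h
      rw [← norm_eq_zero, h, norm_eq_zero]
    have e1 : p.1.1 = 0 ↔ q.1.1 = 0 := key _ _ h1
    have e2 : p.1.2 = 0 ↔ q.1.2 = 0 := key _ _ h2
    refine ⟨h1.symm, h2.symm, ?_, ?_, ?_⟩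
    · rintro ⟨hq1, hq2⟩
      obtain ⟨k, hk⟩ := h3 ⟨fun h => hq1 (e1.mp h), e2.mpr hq2⟩
      exact ⟨-k, by push_cast; linarith⟩
    · rintro ⟨hq1, hq2⟩
      obtain ⟨k, hk⟩ := h4 ⟨e1.mpr hq1, fun h => hq2 (e2.mp h)⟩
      exact ⟨-k, by push_cast; linarith⟩
    · rintro ⟨hq1, hq2⟩
      exact (h5 ⟨e1.mpr hq1, e2.mpr hq2⟩).symm
  · rintro p q r ⟨h1, h2, h3, h4, h5⟩ ⟨g1, g2, g3, g4, g5⟩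
    have key : ∀ a b : ℂ, ‖a‖ = ‖b‖ → (a = 0 ↔ b = 0) := by
      intro a b h
      rw [← norm_eq_zero, h, norm_eq_zero]
    have e1 : p.1.1 = 0 ↔ q.1.1 = 0 := key _ _ h1
    have e2 : p.1.2 = 0 ↔ q.1.2 = 0 := key _ _ h2
    refine ⟨h1.trans g1, h2.trans g2, ?_, ?_, ?_⟩
    · rintro ⟨hp1, hp2⟩
      obtain ⟨k, hk⟩ := h3 ⟨hp1, hp2⟩
      obtain ⟨l, hl⟩ := g3 ⟨fun h => hp1 (e1.mpr h), e2.mp hp2⟩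
      exact ⟨k + l, by push_cast; linarith⟩
    · rintro ⟨hp1, hp2⟩
      obtain ⟨k, hk⟩ := h4 ⟨hp1, hp2⟩
      obtain ⟨l, hl⟩ := g4 ⟨e1.mp hp1, fun h => hp2 (e2.mpr h)⟩
      refine ⟨k + l, by push_cast; linarith [mul_add θ (k : ℝ) (l : ℝ)]⟩
    · rintro ⟨hp1, hp2⟩
      exact (h5 ⟨hp1, hp2⟩).trans (g5 ⟨e1.mp hp1, e2.mp hp2⟩)

/-- The setoid on `ℂ² × ℝ` given by the relation `∼`. -/
def mSetoid (θ : ℝ) : Setoid ((ℂ × ℂ) × ℝ) := ⟨mrel θ, mrel_equivalence θ⟩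

/-- The quotient space `Q_θ = (ℂ² × ℝ)/∼`, with the quotient topology. -/
abbrev Qspace (θ : ℝ) : Type := Quotient (mSetoid θ)

/-- The quotient map `q : ℂ² × ℝ → Q_θ`. -/
def qmap (θ : ℝ) : (ℂ × ℂ) × ℝ → Qspace θ := Quotient.mk (mSetoid θ)


/-- The map `P ↦ (|z₁|, |z₂|)` descends to the quotient. -/
noncomputable def absmap (θ : ℝ) : Qspace θ → ℝ × ℝ :=
  Quotient.lift (fun p => (‖p.1.1‖, ‖p.1.2‖))
    (fun _ _ h => Prod.ext h.1 h.2.1)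

lemma continuous_absmap (θ : ℝ) : Continuous (absmap θ) := by
  apply Continuous.quotient_lift
  exact (continuous_norm.comp (continuous_fst.comp continuous_fst)).prodMk
    (continuous_norm.comp (continuous_snd.comp continuous_fst))

lemma continuous_qmap (θ : ℝ) : Continuous (qmap θ) := continuous_quotient_mk'

/-- If the moduli agree, there is a sequence converging to both points:
perturb the zero coordinates, since the relation imposes no condition on the real
parameter when both complex coordinates are nonzero. -/
lemma common_seq (θ : ℝ) (z w : ℂ × ℂ) (τ σ : ℝ)
    (h1 : ‖z.1‖ = ‖w.1‖) (h2 : ‖z.2‖ = ‖w.2‖) :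
    ∃ u : ℕ → Qspace θ, Tendsto u atTop (𝓝 (qmap θ (z, τ))) ∧
      Tendsto u atTop (𝓝 (qmap θ (w, σ))) := by
  set ε : ℕ → ℂ := fun n => ((1 / (n + 1) : ℝ) : ℂ) with hε
  have hεne : ∀ n, ε n ≠ 0 := by
    intro n
    simp only [hε, ne_eq, Complex.ofReal_eq_zero, div_eq_zero_iff, one_ne_zero, false_or]
    positivity
  have hε0 : Tendsto ε atTop (𝓝 0) := by
    have h := (Complex.continuous_ofReal.tendsto 0).comp
      tendsto_one_div_add_atTop_nhds_zero_nat
    rw [Complex.ofReal_zero] at h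
    exact h
  have e1 : z.1 = 0 ↔ w.1 = 0 := by
    rw [← norm_eq_zero, h1, norm_eq_zero]
  have e2 : z.2 = 0 ↔ w.2 = 0 := by
    rw [← norm_eq_zero, h2, norm_eq_zero]
  set a : ℕ → ℂ := fun n => if z.1 = 0 then ε n else z.1 with ha
  set b : ℕ → ℂ := fun n => if z.2 = 0 then ε n else z.2 with hb
  set c : ℕ → ℂ := fun n => if w.1 = 0 then ε n else w.1 with hc
  set d : ℕ → ℂ := fun n => if w.2 = 0 then ε n else w.2 with hd
  have hane : ∀ n, a n ≠ 0 := fun n => by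
    by_cases h : z.1 = 0 <;> simp [ha, h, hεne n]
  have hbne : ∀ n, b n ≠ 0 := fun n => by
    by_cases h : z.2 = 0 <;> simp [hb, h, hεne n]
  have key : ∀ n, qmap θ ((a n, b n), τ) = qmap θ ((c n, d n), σ) := by
    intro n
    apply Quotient.sound
    refine ⟨?_, ?_, ?_, ?_, ?_⟩
    · by_cases h : z.1 = 0
      · simp [ha, hc, h, e1.mp h]
      · have hw : w.1 ≠ 0 := fun hw => h (e1.mpr hw)
        simp [ha, hc, h, hw, h1]
    · by_cases h : z.2 = 0
      · simp [hb, hd, h, e2.mp h]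
      · have hw : w.2 ≠ 0 := fun hw => h (e2.mpr hw)
        simp [hb, hd, h, hw, h2]
    · rintro ⟨_, hb0⟩; exact absurd hb0 (hbne n)
    · rintro ⟨ha0, _⟩; exact absurd ha0 (hane n)
    · rintro ⟨ha0, _⟩; exact absurd ha0 (hane n)
  have hta : Tendsto a atTop (𝓝 z.1) := by
    by_cases h : z.1 = 0
    · simpa [ha, h] using hε0
    · simpa [ha, h] using tendsto_const_nhds
  have htb : Tendsto b atTop (𝓝 z.2) := by
    by_cases h : z.2 = 0
    · simpa [hb, h] using hε0
    · simpa [hb, h] using tendsto_const_nhds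
  have htc : Tendsto c atTop (𝓝 w.1) := by
    by_cases h : w.1 = 0
    · simpa [hc, h] using hε0
    · simpa [hc, h] using tendsto_const_nhds
  have htd : Tendsto d atTop (𝓝 w.2) := by
    by_cases h : w.2 = 0
    · simpa [hd, h] using hε0
    · simpa [hd, h] using tendsto_const_nhds
  refine ⟨fun n => qmap θ ((a n, b n), τ), ?_, ?_⟩
  · have : Tendsto (fun n => ((a n, b n), τ)) atTop (𝓝 ((z.1, z.2), τ)) :=
      (hta.prodMk_nhds htb).prodMk_nhds tendsto_const_nhds
    have := ((continuous_qmap θ).tendsto _).comp this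
    simpa [Function.comp_def] using this
  · have : Tendsto (fun n => ((c n, d n), σ)) atTop (𝓝 ((w.1, w.2), σ)) :=
      (htc.prodMk_nhds htd).prodMk_nhds tendsto_const_nhds
    have h' := ((continuous_qmap θ).tendsto _).comp this
    have : (fun n => qmap θ ((a n, b n), τ)) = fun n => qmap θ ((c n, d n), σ) :=
      funext key
    rw [this]
    simpa [Function.comp_def] using h'

/-- For `P = q((z₁,z₂), τ)` and `P' = q((w₁,w₂), σ)` in `Q_θ`, the following are equivalent:
(i) `f(P) = f(P')` for every bounded continuous `f : Q_θ → ℝ`;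
(ii) `|z₁| = |w₁|` and `|z₂| = |w₂|`;
(iii) `P` and `P'` do not have disjoint neighbourhoods in `Q_θ`. -/
theorem glimm_equivalences (θ : ℝ) (hθ : Irrational θ)
    (z w : ℂ × ℂ) (τ σ : ℝ) :
    ((∀ f : Qspace θ → ℝ, Continuous f → (∃ C : ℝ, ∀ P, |f P| ≤ C) →
        f (qmap θ (z, τ)) = f (qmap θ (w, σ))) ↔
      (‖z.1‖ = ‖w.1‖ ∧ ‖z.2‖ = ‖w.2‖)) ∧
    ((‖z.1‖ = ‖w.1‖ ∧ ‖z.2‖ = ‖w.2‖) ↔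
      ¬ ∃ U ∈ 𝓝 (qmap θ (z, τ)), ∃ V ∈ 𝓝 (qmap θ (w, σ)), Disjoint U V) := by
  have habs : ∀ p : (ℂ × ℂ) × ℝ,
      absmap θ (qmap θ p) = (‖p.1.1‖, ‖p.1.2‖) := fun _ => rfl
  constructor
  · constructor
    · intro H
      have sep : ∀ r : ℝ, (fun P => min |(absmap θ P).1 - r| 1) (qmap θ (z, τ)) =
          (fun P => min |(absmap θ P).1 - r| 1) (qmap θ (w, σ)) := by
        intro r
        refine H (fun P => min |(absmap θ P).1 - r| 1) ?_ ?_
        · exact ((continuous_abs.comp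
            (((continuous_absmap θ).fst).sub continuous_const)).min continuous_const)
        · exact ⟨1, fun P => by
            have h0 : (0:ℝ) ≤ min |(absmap θ P).1 - r| 1 :=
              le_min (abs_nonneg _) zero_le_one
            rw [abs_of_nonneg h0]
            exact min_le_right _ _⟩
      have sep2 : ∀ r : ℝ, (fun P => min |(absmap θ P).2 - r| 1) (qmap θ (z, τ)) =
          (fun P => min |(absmap θ P).2 - r| 1) (qmap θ (w, σ)) := by
        intro r
        refine H (fun P => min |(absmap θ P).2 - r| 1) ?_ ?_
        · exact ((continuous_abs.comp
            (((continuous_absmap θ).snd).sub continuous_const)).min continuous_const)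
        · exact ⟨1, fun P => by
            have h0 : (0:ℝ) ≤ min |(absmap θ P).2 - r| 1 :=
              le_min (abs_nonneg _) zero_le_one
            rw [abs_of_nonneg h0]
            exact min_le_right _ _⟩
      constructor
      · have := sep (‖w.1‖)
        simp only [habs] at this
        simp only [sub_self, abs_zero] at this
        rw [min_eq_left zero_le_one] at this
        have hmin : min |‖z.1‖ - ‖w.1‖| 1 = 0 := this
        rcases min_eq_iff.mp hmin with ⟨h, _⟩ | ⟨h, _⟩
        · linarith [abs_eq_zero.mp h, sub_eq_zero.mp (abs_eq_zero.mp h)]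
        · exact absurd h one_ne_zero
      · have := sep2 (‖w.2‖)
        simp only [habs] at this
        simp only [sub_self, abs_zero] at this
        rw [min_eq_left zero_le_one] at this
        have hmin : min |‖z.2‖ - ‖w.2‖| 1 = 0 := this
        rcases min_eq_iff.mp hmin with ⟨h, _⟩ | ⟨h, _⟩
        · linarith [abs_eq_zero.mp h, sub_eq_zero.mp (abs_eq_zero.mp h)]
        · exact absurd h one_ne_zero
    · rintro ⟨h1, h2⟩ f hf _
      obtain ⟨u, hu, hu'⟩ := common_seq θ z w τ σ h1 h2
      exact tendsto_nhds_unique ((hf.tendsto _).comp hu) ((hf.tendsto _).comp hu')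
  · constructor
    · rintro ⟨h1, h2⟩ ⟨U, hU, V, hV, hUV⟩
      obtain ⟨u, hu, hu'⟩ := common_seq θ z w τ σ h1 h2
      have e1 : ∀ᶠ n in atTop, u n ∈ U := hu hU
      have e2 : ∀ᶠ n in atTop, u n ∈ V := hu' hV
      obtain ⟨n, hnU, hnV⟩ := (e1.and e2).exists
      exact Set.disjoint_left.mp hUV hnU hnV
    · intro hnd
      by_contra hne
      apply hnd
      have hne' : absmap θ (qmap θ (z, τ)) ≠ absmap θ (qmap θ (w, σ)) := by
        rw [habs, habs]
        intro h
        exact hne ⟨congrArg Prod.fst h, congrArg Prod.snd h⟩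
      obtain ⟨u, v, hu, hv, hxu, hyv, huv⟩ := t2_separation hne'
      refine ⟨absmap θ ⁻¹' u, ?_, absmap θ ⁻¹' v, ?_, ?_⟩
      · exact (hu.preimage (continuous_absmap θ)).mem_nhds hxu
      · exact (hv.preimage (continuous_absmap θ)).mem_nhds hyv
      · exact huv.preimage _
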